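/- Let n ≥ 2 and H > 0. Consider n agents where only agent 1 has a signal s ∈ {0,1}, a downward-closed feasibility family I consisting of the sets {1}, ∅, and all subsets of {2,…,n}, and values v₁(0) = 1, v₁(1) = 1+H, and v_i(0) = 0, v_i(1) = H for all agents i ≥ 2. Let x : {0,1} → Finset (Fin n) be a deterministic allocation with x(0), x(1) ∈ I that is monotone for agent 1 (if 1 ∈ x(0) then 1 ∈ x(1)). Then min( Σ_{i ∈ x(0)} v_i(0) / 1 , Σ_{i ∈ x(1)} v_i(1) / ((n−1)·H) ) ≤ (1+H)/((n−1)·H). Consequently no deterministic ex-post IC mechanism achieves better than an (n−1)-approximation to the optimal welfare in this downward-closed setting, even though the valuations are single-crossing and SOS. -/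
import Mathlib


/-- Theorem B.1 (thm:dc-sc-lb): the downward-closed instance with `n ≥ 2`
agents where only agent `a` ("agent 1") has a binary signal, the feasibility
family consists of `{a}`, `∅`, and all subsets of the other agents, and the
values are `v_a(0) = 1`, `v_a(1) = 1 + H`, `v_i(0) = 0`, `v_i(1) = H` for
`i ≠ a`.  Any deterministic allocation `x` with feasible served sets that is
monotone for agent `a` has worst-case welfare ratio at most
`(1+H)/((n−1)·H)`; as `H → ∞` this shows no deterministic ex-post IC
mechanism beats an `(n−1)`-approximation, even though the valuations are
single-crossing and SOS. -/
theorem downward_closed_det_lb (n : ℕ) (hn : 2 ≤ n) (H : ℝ) (hH : 0 < H)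
    (a : Fin n)
    (v : Fin n → Bool → ℝ)
    (hv : ∀ i b, v i b =
      if i = a then (if b then 1 + H else 1) else (if b then H else 0))
    (x : Bool → Finset (Fin n))
    (hfeas : ∀ b, x b ∈ insert ({a} : Finset (Fin n))
      ((({a} : Finset (Fin n))ᶜ).powerset))
    (hmono : a ∈ x false → a ∈ x true) :
    min ((∑ i ∈ x false, v i false) / 1)
        ((∑ i ∈ x true, v i true) / (((n : ℝ) - 1) * H))
      ≤ (1 + H) / (((n : ℝ) - 1) * H) := by
  have hden : 0 < ((n : ℝ) - 1) * H := by
    apply mul_pos _ hH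
    have : (2:ℝ) ≤ n := by exact_mod_cast hn
    linarith
  by_cases hma : a ∈ x false
  · -- then x false = {a}, so x true = {a}
    have h1 : x false = {a} := by
      rcases Finset.mem_insert.mp (hfeas false) with h | h
      · exact h
      · exfalso
        have := Finset.mem_powerset.mp h hma
        simp at this
    have h2 : x true = {a} := by
      rcases Finset.mem_insert.mp (hfeas true) with h | h
      · exact h
      · exfalso
        have := Finset.mem_powerset.mp h (hmono hma)
        simp at this
    have : (∑ i ∈ x true, v i true) = 1 + H := by
      rw [h2, Finset.sum_singleton, hv]; simp
    refine le_trans (min_le_right _ _) ?_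
    rw [this]
  · -- all values at false are 0
    have hz : (∑ i ∈ x false, v i false) = 0 := by
      apply Finset.sum_eq_zero
      intro i hi
      have hia : i ≠ a := fun h => hma (h ▸ hi)
      rw [hv]; simp [hia]
    refine le_trans (min_le_left _ _) ?_
    rw [hz]
    simp only [zero_div]
    positivity
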